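/- For every integer n ≥ 2, every harmonious total colouring of the complete graph K_n uses at least 3n/2 colours; that is, h_t(K_n) ≥ 3n/2 (equivalently, h_t(K_n) ≥ ⌈3n/2⌉). -/

import Mathlib

/-- A harmonious total colouring of a simple graph `G` with `k` colours:
vertex colours `cv`, edge colours `ce`; proper on vertices, edges and
vertex-edge incidences, and the unordered pairs `{cv v, ce e}` over incident
vertex-edge pairs are pairwise distinct. -/
def IsHarmoniousTotalColoring {V : Type*} (G : SimpleGraph V) (k : ℕ)
    (cv : V → Fin k) (ce : Sym2 V → Fin k) : Prop :=
  (∀ u v, G.Adj u v → cv u ≠ cv v) ∧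
  (∀ e f, e ∈ G.edgeSet → f ∈ G.edgeSet → e ≠ f → (∃ v, v ∈ e ∧ v ∈ f) → ce e ≠ ce f) ∧
  (∀ v e, e ∈ G.edgeSet → v ∈ e → cv v ≠ ce e) ∧
  (∀ v e w f, e ∈ G.edgeSet → f ∈ G.edgeSet → v ∈ e → w ∈ f →
    s(cv v, ce e) = s(cv w, ce f) → v = w ∧ e = f)


open Finset

lemma HTC.sym2_filter {n : ℕ} (a b : Fin n) (_hab : a ≠ b) :
    (Finset.univ.filter (fun v => v ∈ s(a, b))) = {a, b} := by
  ext v; simp [Sym2.mem_iff]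

lemma HTC.sym2_filter_card {n : ℕ} (e : Sym2 (Fin n)) (he : ¬ e.IsDiag) :
    (Finset.univ.filter (fun v => v ∈ e)).card = 2 := by
  induction e using Sym2.ind with
  | _ a b =>
    rw [Sym2.mk_isDiag_iff] at he
    rw [HTC.sym2_filter a b he, Finset.card_insert_of_notMem (by simp [he]),
      Finset.card_singleton]

lemma HTC.exists_coloring (n : ℕ) :
    ∃ k cv ce, IsHarmoniousTotalColoring (⊤ : SimpleGraph (Fin n)) k cv ce := by
  classical
  set N := Fintype.card (Sym2 (Fin n)) with hN
  set enc := Fintype.equivFin (Sym2 (Fin n)) with henc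
  refine ⟨n + N, fun v => ⟨v.1, by omega⟩, fun e => ⟨n + (enc e).1, by
    have := (enc e).2; omega⟩, ?_, ?_, ?_, ?_⟩
  · intro u v huv h
    exact (SimpleGraph.top_adj u v).mp huv (by simpa [Fin.ext_iff] using h)
  · intro e f _ _ hef _ h
    apply hef; apply enc.injective; apply Fin.ext; simpa [Fin.ext_iff] using h
  · intro v e _ _ h
    have hv := v.2
    simp only [Fin.ext_iff] at h
    omega
  · intro v e w f _ _ _ _ hs
    rw [Sym2.eq_iff] at hs
    rcases hs with ⟨h1, h2⟩ | ⟨h1, h2⟩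
    · simp only [Fin.ext_iff] at h1 h2
      have hv := v.2
      have hw := w.2
      constructor
      · exact Fin.ext (by omega)
      · exact enc.injective (Fin.ext (by omega))
    · exfalso
      have hv := v.2
      simp only [Fin.ext_iff] at h1
      omega

lemma HTC.key {n k : ℕ} (hn : 2 ≤ n) (cv : Fin n → Fin k) (ce : Sym2 (Fin n) → Fin k)
    (h : IsHarmoniousTotalColoring (⊤ : SimpleGraph (Fin n)) k cv ce) :
    3 * n ≤ 2 * k := by
  classical
  obtain ⟨h1, h2, h3, h4⟩ := h
  have hcvinj : Function.Injective cv := by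
    intro u v huv
    by_contra hne
    exact h1 u v ((SimpleGraph.top_adj u v).mpr hne) huv
  set E : Finset (Sym2 (Fin n)) := (⊤ : SimpleGraph (Fin n)).edgeFinset with hE
  have hEmem : ∀ e ∈ E, e ∈ (⊤ : SimpleGraph (Fin n)).edgeSet :=
    fun e he => SimpleGraph.mem_edgeFinset.mp he
  have hEdiag : ∀ e ∈ E, ¬ e.IsDiag := by
    intro e he
    have := hEmem e he
    rwa [SimpleGraph.edgeSet_top, Set.mem_compl_iff, Sym2.mem_diagSet] at this
  set A : Finset (Fin k) := Finset.image cv Finset.univ with hA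
  have hAcard : A.card = n := by
    rw [hA, Finset.card_image_of_injective _ hcvinj, Finset.card_univ, Fintype.card_fin]
  have hnk : n ≤ k := by
    calc n = A.card := hAcard.symm
    _ ≤ (Finset.univ : Finset (Fin k)).card := Finset.card_le_card (Finset.subset_univ _)
    _ = k := by simp
  set M : Fin k → ℕ := fun c => (E.filter fun e => ce e = c).card with hM
  have hbi : ∀ c : Fin k,
      ((E.filter fun e => ce e = c).biUnion fun e => Finset.univ.filter (· ∈ e)).card
        = 2 * M c := by
    intro c
    rw [Finset.card_biUnion]
    · rw [Finset.sum_congr rfl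
        (fun e he => HTC.sym2_filter_card e (hEdiag e (Finset.mem_filter.mp he).1))]
      simp [hM, mul_comm]
    · intro x hx y hy hxy
      rw [Finset.mem_coe] at hx hy
      rw [Function.onFun, Finset.disjoint_left]
      intro v hvx hvy
      simp only [Finset.mem_filter, Finset.mem_univ, true_and] at hvx hvy
      exact h2 x y (hEmem x (Finset.mem_filter.mp hx).1) (hEmem y (Finset.mem_filter.mp hy).1)
        hxy ⟨v, hvx, hvy⟩
        (by rw [(Finset.mem_filter.mp hx).2, (Finset.mem_filter.mp hy).2])
  have hmatch : ∀ c : Fin k, 2 * M c ≤ n := by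
    intro c
    rw [← hbi c]
    calc _ ≤ (Finset.univ : Finset (Fin n)).card := Finset.card_le_card (Finset.subset_univ _)
    _ = n := by simp
  set a : Fin n → ℕ := fun v => (E.filter fun e => v ∈ e ∧ ce e ∈ A).card with ha
  -- refined bound for vertex colours
  have hB : ∀ v : Fin n, 2 * M (cv v) + a v ≤ n - 1 := by
    intro v
    set c := cv v with hc
    set U := (E.filter fun e => ce e = c).biUnion (fun e => Finset.univ.filter (· ∈ e)) with hU
    have hUmem : ∀ w ∈ U, ∃ f, f ∈ E ∧ ce f = c ∧ w ∈ f := by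
      intro w hw
      rw [hU, Finset.mem_biUnion] at hw
      obtain ⟨f, hf, hwf⟩ := hw
      exact ⟨f, (Finset.mem_filter.mp hf).1, (Finset.mem_filter.mp hf).2,
        (Finset.mem_filter.mp hwf).2⟩
    have hvnot : ∀ f, f ∈ E → ce f = c → v ∉ f := by
      intro f hf hfc hvf
      exact h3 v f (hEmem f hf) hvf (by rw [hfc])
    set V1 := U.image cv with hV1
    set V2 := (E.filter fun e => v ∈ e ∧ ce e ∈ A).image ce with hV2
    have hV1card : V1.card = 2 * M c := by
      rw [hV1, Finset.card_image_of_injective _ hcvinj, ← hbi c]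
    have hV2card : V2.card = a v := by
      rw [hV2, ha]
      apply Finset.card_image_of_injOn
      intro e he e' he' hee
      by_contra hne
      exact h2 e e' (hEmem e (Finset.mem_filter.mp he).1) (hEmem e' (Finset.mem_filter.mp he').1)
        hne ⟨v, (Finset.mem_filter.mp he).2.1, (Finset.mem_filter.mp he').2.1⟩ hee
    have hV1sub : V1 ⊆ A.erase c := by
      intro x hx
      rw [hV1, Finset.mem_image] at hx
      obtain ⟨w, hw, hwx⟩ := hx
      obtain ⟨f, hf, hfc, hwf⟩ := hUmem w hw
      rw [Finset.mem_erase]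
      constructor
      · rw [← hwx, hc]
        intro heq
        exact hvnot f hf hfc ((hcvinj heq) ▸ hwf)
      · rw [← hwx, hA]; exact Finset.mem_image_of_mem cv (Finset.mem_univ w)
    have hV2sub : V2 ⊆ A.erase c := by
      intro x hx
      rw [hV2, Finset.mem_image] at hx
      obtain ⟨e, he, hex⟩ := hx
      have hem := Finset.mem_filter.mp he
      rw [Finset.mem_erase]
      exact ⟨by rw [← hex, hc]; exact fun heq => h3 v e (hEmem e hem.1) hem.2.1 heq.symm,
        hex ▸ hem.2.2⟩
    have hdisj : Disjoint V1 V2 := by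
      rw [Finset.disjoint_left]
      intro x hx1 hx2
      rw [hV1, Finset.mem_image] at hx1
      rw [hV2, Finset.mem_image] at hx2
      obtain ⟨w, hw, hwx⟩ := hx1
      obtain ⟨e, he, hex⟩ := hx2
      obtain ⟨f, hf, hfc, hwf⟩ := hUmem w hw
      have hem := Finset.mem_filter.mp he
      have heq : s(cv v, ce e) = s(cv w, ce f) := by
        rw [hfc, hex, hwx]; exact Sym2.eq_swap
      obtain ⟨hvw, -⟩ := h4 v e w f (hEmem e hem.1) (hEmem f hf) hem.2.1 hwf heq
      exact hvnot f hf hfc (hvw ▸ hwf)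
    calc 2 * M c + a v = V1.card + V2.card := by rw [hV1card, hV2card]
    _ = (V1 ∪ V2).card := (Finset.card_union_of_disjoint hdisj).symm
    _ ≤ (A.erase c).card := Finset.card_le_card (Finset.union_subset hV1sub hV2sub)
    _ = n - 1 := by
        rw [Finset.card_erase_of_mem, hAcard]
        rw [hA, hc]; exact Finset.mem_image_of_mem cv (Finset.mem_univ v)
  -- summing
  have hsum : ∑ v : Fin n, (2 * M (cv v) + a v) ≤ n * (n - 1) := by
    calc ∑ v : Fin n, (2 * M (cv v) + a v) ≤ ∑ _v : Fin n, (n - 1) :=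
      Finset.sum_le_sum (fun v _ => hB v)
    _ = n * (n - 1) := by simp [mul_comm]
  have hacount : ∑ v : Fin n, a v = 2 * (E.filter fun e => ce e ∈ A).card := by
    have h0 : ∀ v : Fin n, a v = ∑ e ∈ E, if v ∈ e ∧ ce e ∈ A then 1 else 0 := by
      intro v; rw [ha]; exact Finset.card_filter _ _
    rw [Finset.sum_congr rfl (fun v _ => h0 v), Finset.sum_comm,
      Finset.card_filter, Finset.mul_sum]
    refine Finset.sum_congr rfl (fun e he => ?_)
    by_cases hce : ce e ∈ A
    · simp only [hce, and_true, if_true, mul_one]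
      rw [← Finset.card_filter]
      exact HTC.sym2_filter_card e (hEdiag e he)
    · simp [hce]
  have hfib : (E.filter fun e => ce e ∈ A).card = ∑ c ∈ A, M c := by
    rw [Finset.card_eq_sum_card_fiberwise (f := ce) (s := E.filter fun e => ce e ∈ A) (t := A)
      (fun e he => (Finset.mem_filter.mp he).2)]
    refine Finset.sum_congr rfl (fun c hc => ?_)
    rw [hM, Finset.filter_filter]
    congr 1
    apply Finset.filter_congr
    intro e _
    exact ⟨fun h => h.2, fun h => ⟨h ▸ hc, h⟩⟩
  have hMA : ∑ c ∈ A, M c = ∑ v : Fin n, M (cv v) := by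
    rw [hA, Finset.sum_image (fun x _ y _ hxy => hcvinj hxy)]
  have htot : ∑ c ∈ A, M c + ∑ c ∈ Aᶜ, M c = E.card := by
    rw [Finset.sum_add_sum_compl]
    exact (Finset.card_eq_sum_card_fiberwise
      (f := ce) (t := (Finset.univ : Finset (Fin k))) (fun e _ => Finset.mem_univ _)).symm
  have hMB : ∑ c ∈ Aᶜ, M c ≤ (k - n) * (n / 2) := by
    calc ∑ c ∈ Aᶜ, M c ≤ Aᶜ.card * (n / 2) := by
          apply Finset.sum_le_card_nsmul
          intro c _
          have := hmatch c
          omega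
    _ = (k - n) * (n / 2) := by rw [Finset.card_compl, hAcard, Fintype.card_fin]
  have hEcard : 2 * E.card = n * (n - 1) := by
    rw [hE, SimpleGraph.card_edgeFinset_top_eq_card_choose_two, Fintype.card_fin,
      Nat.choose_two_right]
    have hdvd : 2 ∣ n * (n - 1) := by
      rcases Nat.even_or_odd n with hh | hh
      · exact Dvd.dvd.mul_right hh.two_dvd _
      · have h2 : 2 ∣ (n - 1) := by
          rw [Nat.odd_iff] at hh; omega
        exact Dvd.dvd.mul_left h2 n
    obtain ⟨t, ht⟩ := hdvd
    rw [ht]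
    omega
  -- assemble
  have hSA : 4 * (∑ v : Fin n, M (cv v)) ≤ n * (n - 1) := by
    have e1 : ∑ v : Fin n, (2 * M (cv v) + a v)
        = 2 * (∑ v : Fin n, M (cv v)) + ∑ v : Fin n, a v := by
      rw [Finset.sum_add_distrib, Finset.mul_sum]
    rw [e1, hacount, hfib, hMA] at hsum
    omega
  have hfinal : n * (n - 1) ≤ 4 * ((k - n) * (n / 2)) := by
    have e2 : 2 * (∑ c ∈ A, M c) + 2 * (∑ c ∈ Aᶜ, M c) = n * (n - 1) := by
      rw [← hEcard]; omega
    rw [hMA] at e2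
    set SA := ∑ v : Fin n, M (cv v)
    set SB := ∑ c ∈ Aᶜ, M c
    set Q := (k - n) * (n / 2)
    set P := n * (n - 1)
    omega
  rcases Nat.even_or_odd n with ⟨m, hm⟩ | ⟨m, hm⟩
  · have e1 : (m + m) * ((m + m) - 1) ≤ (m + m) * (2 * (k - n)) := by
      calc (m + m) * ((m + m) - 1) = n * (n - 1) := by rw [hm]
      _ ≤ 4 * ((k - n) * (n / 2)) := hfinal
      _ = (m + m) * (2 * (k - n)) := by rw [show n / 2 = m by omega]; ring
    have e2 : (m + m) - 1 ≤ 2 * (k - n) := Nat.le_of_mul_le_mul_left e1 (by omega)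
    omega
  · have e1 : (2 * m + 1) * (2 * m) ≤ (2 * (k - n)) * (2 * m) := by
      calc (2 * m + 1) * (2 * m) = n * (n - 1) := by
            rw [hm, show 2 * m + 1 - 1 = 2 * m from rfl]
      _ ≤ 4 * ((k - n) * (n / 2)) := hfinal
      _ = (2 * (k - n)) * (2 * m) := by rw [show n / 2 = m by omega]; ring
    have e2 : 2 * m + 1 ≤ 2 * (k - n) := Nat.le_of_mul_le_mul_right e1 (by omega)
    omega


/-- The harmonious total chromatic number of `G`. -/
noncomputable def harmoniousTotalChromaticNumber {V : Type*} (G : SimpleGraph V) : ℕ :=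
  sInf {k | ∃ cv ce, IsHarmoniousTotalColoring G k cv ce}

/-- For every integer `n ≥ 2`, `h_t(K_n) ≥ 3n/2`. -/
theorem ht_complete_graph_lower (n : ℕ) (hn : 2 ≤ n) :
    (3 * n : ℚ) / 2 ≤ (harmoniousTotalChromaticNumber (⊤ : SimpleGraph (Fin n)) : ℚ) := by
  have hne : {k | ∃ cv ce,
      IsHarmoniousTotalColoring (⊤ : SimpleGraph (Fin n)) k cv ce}.Nonempty := by
    obtain ⟨k, cv, ce, hk⟩ := HTC.exists_coloring n
    exact ⟨k, cv, ce, hk⟩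
  obtain ⟨cv, ce, hc⟩ := Nat.sInf_mem hne
  have h3n := HTC.key hn cv ce hc
  rw [harmoniousTotalChromaticNumber] at *
  rw [div_le_iff₀ (by norm_num : (0:ℚ) < 2)]
  exact_mod_cast (by omega :
    3 * n ≤ (sInf {k | ∃ cv ce, IsHarmoniousTotalColoring (⊤ : SimpleGraph (Fin n)) k cv ce}) * 2)
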